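/- For every s ∈ [0,1], 2·∫₀¹∫₀¹ 1_{s<x}·(xy)^β·h(s/x) dy dx = (1−s)·h(s). Equivalently, for U, V independent uniform on [0,1], 2·E[1_{s<U}·(UV)^β·h(s/U)] = (1−s)·h(s). -/

import Mathlib

open MeasureTheory Real Set

/-- The exponent `β = (√17 - 3)/2`, the positive root of `(β+1)(β+2) = 4`. -/
noncomputable def β : ℝ := (Real.sqrt 17 - 3) / 2

/-- The scaling function `h(s) = (s(1-s))^{β/2}`. -/
noncomputable def h (s : ℝ) : ℝ := (s * (1 - s)) ^ (β / 2)

/-- For every `s ∈ [0,1]`:  `2 ∫₀¹∫₀¹ 1_{s<x} (xy)^β h(s/x) dy dx = (1-s) h(s)`. -/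
theorem half_martingale_identity :
    ∀ s ∈ Set.Icc (0 : ℝ) 1,
      2 * (∫ x in (0:ℝ)..1, ∫ y in (0:ℝ)..1,
        (if s < x then (x * y) ^ β * h (s / x) else 0)) = (1 - s) * h s := by
  intro s hs
  obtain ⟨hs0, hs1⟩ := hs
  have ht : Real.sqrt 17 ^ 2 = 17 := Real.sq_sqrt (by norm_num)
  have hβpos : 0 < β := by
    have h3 : (3:ℝ) < Real.sqrt 17 := by nlinarith [Real.sqrt_nonneg (17:ℝ)]
    unfold β; linarith
  have hβeq : (β + 1) * (β + 2) = 4 := by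
    unfold β; linear_combination (1/4 : ℝ) * ht
  have d1 : (0:ℝ) < β/2+1 := by linarith
  have d2 : (0:ℝ) < β+1 := by linarith
  rcases hs0.eq_or_lt with h0 | h0
  · -- s = 0
    have hh0 : h 0 = 0 := by
      simp [h, Real.zero_rpow (half_pos hβpos).ne']
    rw [← h0]
    simp [zero_div, hh0]
  · -- 0 < s
    have hinner : ∀ x : ℝ, (∫ y in (0:ℝ)..1, (if s < x then (x*y)^β * h (s/x) else 0))
        = (if s < x then (s*(x-s))^(β/2) else 0) * (1/(β+1)) := by
      intro x
      by_cases hx : s < x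
      · simp only [if_pos hx]
        have hx0 : 0 < x := lt_trans h0 hx
        have key : x ^ β * h (s/x) = (s*(x-s))^(β/2) := by
          have h1 : s/x * (1 - s/x) = s*(x-s)/x^2 := by
            field_simp
          have h2 : x ^ β = (x^2) ^ (β/2) := by
            rw [← Real.rpow_natCast x 2, ← Real.rpow_mul hx0.le]
            congr 1
            ring
          rw [h, h1, h2,
            ← Real.mul_rpow (by positivity)
              (div_nonneg (mul_nonneg h0.le (by linarith)) (by positivity))]
          congr 1
          field_simp
        calc ∫ y in (0:ℝ)..1, (x*y)^β * h (s/x)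
            = ∫ y in (0:ℝ)..1, (x^β * h (s/x)) * y^β := by
              apply intervalIntegral.integral_congr
              intro y hy
              rw [Set.uIcc_of_le (by norm_num : (0:ℝ) ≤ 1)] at hy
              show (x*y)^β * h (s/x) = (x^β * h (s/x)) * y^β
              rw [Real.mul_rpow hx0.le hy.1]
              ring
          _ = (x^β * h (s/x)) * ∫ y in (0:ℝ)..1, y^β :=
              intervalIntegral.integral_const_mul _ _
          _ = (s*(x-s))^(β/2) * (1/(β+1)) := by
              rw [integral_rpow (Or.inl (by linarith)), key,
                Real.one_rpow, Real.zero_rpow (ne_of_gt d2)]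
              norm_num
      · simp [if_neg hx]
    simp_rw [hinner]
    rw [intervalIntegral.integral_mul_const]
    have houter : (∫ x in (0:ℝ)..1, (if s < x then (s*(x-s))^(β/2) else 0))
        = ∫ x in s..1, (s*(x-s))^(β/2) := by
      rw [intervalIntegral.integral_of_le (by norm_num : (0:ℝ) ≤ 1),
          intervalIntegral.integral_of_le hs1]
      have hind : ∀ x : ℝ, (if s < x then (s*(x-s))^(β/2) else 0)
          = Set.indicator (Set.Ioi s) (fun x => (s*(x-s))^(β/2)) x := by
        intro x
        rw [Set.indicator_apply]
        rfl
      rw [show (fun x : ℝ => if s < x then (s*(x-s))^(β/2) else 0)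
          = Set.indicator (Set.Ioi s) (fun x => (s*(x-s))^(β/2)) from funext hind]
      rw [MeasureTheory.integral_indicator measurableSet_Ioi,
        Measure.restrict_restrict measurableSet_Ioi]
      have hset : Set.Ioi s ∩ Set.Ioc 0 1 = Set.Ioc s 1 := by
        ext x
        simp only [Set.mem_inter_iff, Set.mem_Ioi, Set.mem_Ioc]
        exact ⟨fun ⟨a, _, c⟩ => ⟨a, c⟩, fun ⟨a, b⟩ => ⟨a, lt_of_le_of_lt hs0 a, b⟩⟩
      rw [hset]
    have hmul : (∫ x in s..1, (s*(x-s))^(β/2)) = s^(β/2) * ∫ x in s..1, (x-s)^(β/2) := by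
      rw [← intervalIntegral.integral_const_mul]
      apply intervalIntegral.integral_congr
      intro x hx
      rw [Set.uIcc_of_le hs1] at hx
      show (s*(x-s))^(β/2) = s^(β/2) * (x-s)^(β/2)
      rw [Real.mul_rpow h0.le (by linarith [hx.1] : (0:ℝ) ≤ x - s)]
    have hsub : (∫ x in s..1, (x-s)^(β/2)) = (1-s)^(β/2+1)/(β/2+1) := by
      rw [intervalIntegral.integral_comp_sub_right (fun u => u^(β/2)) s]
      simp only [sub_self]
      rw [integral_rpow (Or.inl (by linarith)),
        Real.zero_rpow (ne_of_gt d1)]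
      ring
    have hpow : (1-s)^(β/2+1) = (1-s)^(β/2) * (1-s) := by
      rcases hs1.eq_or_lt with h1 | h1
      · rw [h1]
        simp [Real.zero_rpow (ne_of_gt d1)]
      · rw [Real.rpow_add_one (by linarith : (1:ℝ)-s ≠ 0)]
    have hhs : h s = s^(β/2) * (1-s)^(β/2) := by
      rw [h, Real.mul_rpow h0.le (by linarith)]
    have hc : (β+1) * (β/2+1) = 2 := by linear_combination hβeq / 2
    rw [houter, hmul, hsub, hpow, hhs]
    have hk : 2 * (1 / (β/2+1)) * (1/(β+1)) = 1 := by
      field_simp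
      rw [mul_comm (β+2) (β+1), hβeq]
      norm_num
    linear_combination (s^(β/2) * ((1-s)^(β/2)) * (1-s)) * hk
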